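/- Let μ ∈ [−1, 1] and define F_μ : ℝ⁴ → ℝ⁴ by F_μ(x¹,x²,y¹,y²) = ((x¹)² + (x²)² + μ(y¹)² + μ(y²)², √(2(1−μ))(x¹y¹ − x²y²), √(2(1−μ))(x¹y² + x²y¹), √(1−μ²)((y¹)² + (y²)²)). Then for all (x¹,x²,y¹,y²) ∈ ℝ⁴, writing r² = (x¹)²+(x²)²+(y¹)²+(y²)²: (i) |F_μ|² = r⁴, so F_μ maps S³ into S³; (ii) |DF_μ|² = 4(2−μ)r²; and (iii) the Euclidean Laplacian ΔF_μ is the constant vector (4+4μ, 0, 0, 4√(1−μ²)), so |ΔF_μ|² = 32(1+μ). Consequently, the two conditions |DF_μ|² = 8r² and |ΔF_μ|² = 32 hold if and only if μ = 0. -/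

import Mathlib

/-!
STATEMENT 15: For μ ∈ [−1,1], the map F_μ : ℝ⁴ → ℝ⁴,
F_μ(x¹,x²,y¹,y²) = ((x¹)²+(x²)²+μ(y¹)²+μ(y²)², √(2(1−μ))(x¹y¹−x²y²),
√(2(1−μ))(x¹y²+x²y¹), √(1−μ²)((y¹)²+(y²)²)) satisfies, with
r² = (x¹)²+(x²)²+(y¹)²+(y²)²:
(i) |F_μ|² = r⁴ (so F_μ maps S³ into S³); (ii) |DF_μ|² = 4(2−μ)r²;
(iii) ΔF_μ = (4+4μ, 0, 0, 4√(1−μ²)), so |ΔF_μ|² = 32(1+μ).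
Consequently |DF_μ|² = 8r² everywhere and |ΔF_μ|² = 32 hold iff μ = 0.
-/

/-- Partial derivative of a map `ℝⁿ → ℝᵐ` in the `j`-th coordinate direction. -/
noncomputable def pd {n m : ℕ} (F : (Fin n → ℝ) → (Fin m → ℝ)) (j : Fin n)
    (x : Fin n → ℝ) : Fin m → ℝ :=
  fderiv ℝ F x (Pi.single j 1)

/-- Componentwise Euclidean Laplacian of a map `ℝⁿ → ℝᵐ`. -/
noncomputable def lap {n m : ℕ} (F : (Fin n → ℝ) → (Fin m → ℝ)) (x : Fin n → ℝ) :
    Fin m → ℝ :=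
  fun i => ∑ j, pd (pd F j) j x i

/-- Squared Frobenius norm of the total derivative of `F` at `x`. -/
noncomputable def frobSq {n m : ℕ} (F : (Fin n → ℝ) → (Fin m → ℝ)) (x : Fin n → ℝ) : ℝ :=
  ∑ i, ∑ j, (pd F j x i) ^ 2

/-- The map `F_μ(x¹,x²,y¹,y²) = ((x¹)²+(x²)²+μ(y¹)²+μ(y²)²,
√(2(1−μ))(x¹y¹−x²y²), √(2(1−μ))(x¹y²+x²y¹), √(1−μ²)((y¹)²+(y²)²))`,
with coordinates `(x¹,x²,y¹,y²) = (x 0, x 1, x 2, x 3)`. -/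
noncomputable def mapFmu (μ : ℝ) : (Fin 4 → ℝ) → Fin 4 → ℝ := fun x =>
  ![(x 0) ^ 2 + (x 1) ^ 2 + μ * (x 2) ^ 2 + μ * (x 3) ^ 2,
    Real.sqrt (2 * (1 - μ)) * (x 0 * x 2 - x 1 * x 3),
    Real.sqrt (2 * (1 - μ)) * (x 0 * x 3 + x 1 * x 2),
    Real.sqrt (1 - μ ^ 2) * ((x 2) ^ 2 + (x 3) ^ 2)]

noncomputable def Jm (μ : ℝ) (x : Fin 4 → ℝ) : Matrix (Fin 4) (Fin 4) ℝ :=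
  let a := Real.sqrt (2 * (1 - μ)); let b := Real.sqrt (1 - μ ^ 2)
  !![2 * x 0, 2 * x 1, 2 * μ * x 2, 2 * μ * x 3;
     a * x 2, -(a * x 3), a * x 0, -(a * x 1);
     a * x 3, a * x 2, a * x 1, a * x 0;
     0, 0, 2 * b * x 2, 2 * b * x 3]

lemma hasFD (μ : ℝ) (x : Fin 4 → ℝ) :
    HasFDerivAt (mapFmu μ)
      (LinearMap.toContinuousLinearMap (Matrix.mulVecLin (Jm μ x))) x := by
  have h0 : HasFDerivAt (fun x : Fin 4 → ℝ => x 0) (ContinuousLinearMap.proj (R := ℝ) (φ := fun _ : Fin 4 => ℝ) 0) x :=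
    hasFDerivAt_apply 0 x
  have h1 : HasFDerivAt (fun x : Fin 4 → ℝ => x 1) (ContinuousLinearMap.proj (R := ℝ) (φ := fun _ : Fin 4 => ℝ) 1) x :=
    hasFDerivAt_apply 1 x
  have h2 : HasFDerivAt (fun x : Fin 4 → ℝ => x 2) (ContinuousLinearMap.proj (R := ℝ) (φ := fun _ : Fin 4 => ℝ) 2) x :=
    hasFDerivAt_apply 2 x
  have h3 : HasFDerivAt (fun x : Fin 4 → ℝ => x 3) (ContinuousLinearMap.proj (R := ℝ) (φ := fun _ : Fin 4 => ℝ) 3) x :=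
    hasFDerivAt_apply 3 x
  refine hasFDerivAt_pi'' fun i => ?_
  fin_cases i
  · refine HasFDerivAt.congr_of_eventuallyEq
      (((((h0.mul h0).add (h1.mul h1)).add ((h2.mul h2).const_mul μ)).add
        ((h3.mul h3).const_mul μ)).congr_fderiv ?_)
      (Filter.Eventually.of_forall fun y => by simp [mapFmu]; ring)
    refine ContinuousLinearMap.ext fun v => ?_
    simp [Jm, Matrix.mulVec, dotProduct, Fin.sum_univ_four]
    ring
  · refine HasFDerivAt.congr_of_eventuallyEq
      ((((h0.mul h2).sub (h1.mul h3)).const_mul (Real.sqrt (2 * (1 - μ)))).congr_fderiv ?_)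
      (Filter.Eventually.of_forall fun y => by simp [mapFmu])
    refine ContinuousLinearMap.ext fun v => ?_
    simp [Jm, Matrix.mulVec, dotProduct, Fin.sum_univ_four]
    ring
  · refine HasFDerivAt.congr_of_eventuallyEq
      ((((h0.mul h3).add (h1.mul h2)).const_mul (Real.sqrt (2 * (1 - μ)))).congr_fderiv ?_)
      (Filter.Eventually.of_forall fun y => by simp [mapFmu])
    refine ContinuousLinearMap.ext fun v => ?_
    simp [Jm, Matrix.mulVec, dotProduct, Fin.sum_univ_four]
    ring
  · refine HasFDerivAt.congr_of_eventuallyEq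
      ((((h2.mul h2).add (h3.mul h3)).const_mul (Real.sqrt (1 - μ ^ 2))).congr_fderiv ?_)
      (Filter.Eventually.of_forall fun y => by simp [mapFmu]; ring_nf; simp)
    refine ContinuousLinearMap.ext fun v => ?_
    simp [Jm, Matrix.mulVec, dotProduct, Fin.sum_univ_four]
    ring

lemma pd_mapFmu (μ : ℝ) (j : Fin 4) (x : Fin 4 → ℝ) :
    pd (mapFmu μ) j x = fun i => Jm μ x i j := by
  rw [pd, (hasFD μ x).fderiv]
  simp
  rfl

noncomputable def Hm (μ : ℝ) : Fin 4 → Matrix (Fin 4) (Fin 4) ℝ :=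
  let a := Real.sqrt (2 * (1 - μ)); let b := Real.sqrt (1 - μ ^ 2)
  ![!![2, 0, 0, 0; 0, 0, a, 0; 0, 0, 0, a; 0, 0, 0, 0],
    !![0, 2, 0, 0; 0, 0, 0, -a; 0, 0, a, 0; 0, 0, 0, 0],
    !![0, 0, 2 * μ, 0; a, 0, 0, 0; 0, a, 0, 0; 0, 0, 2 * b, 0],
    !![0, 0, 0, 2 * μ; 0, -a, 0, 0; a, 0, 0, 0; 0, 0, 0, 2 * b]]

lemma pd_mapFmu_lin (μ : ℝ) (j : Fin 4) :
    pd (mapFmu μ) j = fun x => Matrix.mulVec (Hm μ j) x := by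
  funext x
  rw [pd_mapFmu]
  funext i
  fin_cases j <;> fin_cases i <;>
    simp [Jm, Hm, Matrix.mulVec, dotProduct, Fin.sum_univ_four]

lemma pd_lin (M : Matrix (Fin 4) (Fin 4) ℝ) (j : Fin 4) (x : Fin 4 → ℝ) :
    pd (fun y => Matrix.mulVec M y) j x = fun i => M i j := by
  rw [pd]
  have : (fun y : Fin 4 → ℝ => Matrix.mulVec M y) =
      ⇑(LinearMap.toContinuousLinearMap (Matrix.mulVecLin M)) := rfl
  rw [this, ContinuousLinearMap.fderiv]
  simp
  rfl

theorem stmt15 (μ : ℝ) (hμ : -1 ≤ μ ∧ μ ≤ 1) :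
    (∀ x : Fin 4 → ℝ, ∑ i, (mapFmu μ x i) ^ 2 = (∑ j, (x j) ^ 2) ^ 2) ∧
    (∀ x : Fin 4 → ℝ, frobSq (mapFmu μ) x = 4 * (2 - μ) * ∑ j, (x j) ^ 2) ∧
    (∀ (x : Fin 4 → ℝ) (i : Fin 4),
      lap (mapFmu μ) x i = ![4 + 4 * μ, 0, 0, 4 * Real.sqrt (1 - μ ^ 2)] i) ∧
    (∀ x : Fin 4 → ℝ, ∑ i, (lap (mapFmu μ) x i) ^ 2 = 32 * (1 + μ)) ∧
    (((∀ x : Fin 4 → ℝ, frobSq (mapFmu μ) x = 8 * ∑ j, (x j) ^ 2) ∧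
        (∀ x : Fin 4 → ℝ, ∑ i, (lap (mapFmu μ) x i) ^ 2 = 32)) ↔ μ = 0) := by
  obtain ⟨hm1, hm2⟩ := hμ
  have ha : Real.sqrt (2 * (1 - μ)) ^ 2 = 2 * (1 - μ) := Real.sq_sqrt (by linarith)
  have hb : Real.sqrt (1 - μ ^ 2) ^ 2 = 1 - μ ^ 2 := Real.sq_sqrt (by nlinarith)
  have hlap : ∀ (x : Fin 4 → ℝ) (i : Fin 4),
      lap (mapFmu μ) x i = ![4 + 4 * μ, 0, 0, 4 * Real.sqrt (1 - μ ^ 2)] i := by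
    intro x i
    simp only [lap, pd_mapFmu_lin, pd_lin, Fin.sum_univ_four]
    fin_cases i <;> simp [Hm, Matrix.vecHead, Matrix.vecTail] <;> ring
  have hfrob : ∀ x : Fin 4 → ℝ, frobSq (mapFmu μ) x = 4 * (2 - μ) * ∑ j, (x j) ^ 2 := by
    intro x
    simp only [frobSq, pd_mapFmu]
    simp [Jm, Fin.sum_univ_four, -Real.sqrt_mul, -Real.sqrt_mul']
    linear_combination (2 * ((x 0) ^ 2 + (x 1) ^ 2 + (x 2) ^ 2 + (x 3) ^ 2)) * ha +
      (4 * ((x 2) ^ 2 + (x 3) ^ 2)) * hb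
  have hlapsq : ∀ x : Fin 4 → ℝ, ∑ i, (lap (mapFmu μ) x i) ^ 2 = 32 * (1 + μ) := by
    intro x
    rw [Fin.sum_univ_four, hlap x 0, hlap x 1, hlap x 2, hlap x 3]
    simp
    linear_combination 16 * hb
  refine ⟨?_, hfrob, hlap, hlapsq, ?_⟩
  · intro x
    simp [mapFmu, Fin.sum_univ_four, -Real.sqrt_mul, -Real.sqrt_mul']
    linear_combination ((x 0 * x 2 - x 1 * x 3) ^ 2 + (x 0 * x 3 + x 1 * x 2) ^ 2) * ha +
      ((x 2) ^ 2 + (x 3) ^ 2) ^ 2 * hb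
  · constructor
    · rintro ⟨hA, hB⟩
      have h := hB 0
      rw [hlapsq 0] at h
      linarith
    · rintro rfl
      exact ⟨fun x => by rw [hfrob x]; norm_num, fun x => by rw [hlapsq x]; norm_num⟩
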